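/- Let A be an n×n Hermitian matrix and V ⊆ C^n a subspace with orthonormal basis matrix V. Let λ₁^V be the smallest eigenvalue of V* A V with unit eigenvector v, and set u = V v. Suppose γ̃ > 0 satisfies γ̃ ≤ λ_{m+1}(A) - λ₁(A) (a lower bound on the spectral gap, where m is the multiplicity of λ₁(A)), and suppose ℓ ≥ λ₁^V - λ₁(A) and r ≥ ||A u - λ₁^V u||. Then ||P^{W₁^⊥} u|| ≤ (ℓ + r)/γ̃, where W₁ is the eigenspace of λ₁(A). -/

import Mathlib

open scoped Matrix

/-- Computable-surrogate eigenspace error bound: let `A` be Hermitian with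
eigenvalues `lam 0 ≤ ⋯ ≤ lam (n-1)` (orthonormal eigenbasis `w`), smallest
eigenvalue `lam 0` of multiplicity `m` with eigenspace `W₁`, and spectral gap
`lam m - lam 0`.  Let `V` have orthonormal columns, `μ` be the smallest
eigenvalue of `V* A V` with unit eigenvector `v`, and `u = V v`.  If
`0 < γ ≤ lam m - lam 0`, `μ - lam 0 ≤ ell` and `‖A u - μ u‖ ≤ res`, then
`‖P^{W₁^⊥} u‖ ≤ (ell + res)/γ`. -/
theorem stmt19 {n r : ℕ} (hn : 0 < n)
    (A : Matrix (Fin n) (Fin n) ℂ) (hA : A.IsHermitian)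
    (lam : Fin n → ℝ) (hmono : Monotone lam)
    (w : OrthonormalBasis (Fin n) ℂ (EuclideanSpace ℂ (Fin n)))
    (heig : ∀ i, Matrix.toEuclideanLin A (w i) = (lam i : ℂ) • w i)
    (m : ℕ) (hm : m < n) (hm0 : 0 < m)
    (hmul : ∀ i : Fin n, (i : ℕ) < m → lam i = lam ⟨0, hn⟩)
    (hgap : lam ⟨0, hn⟩ < lam ⟨m, hm⟩)
    (V : Matrix (Fin n) (Fin r) ℂ) (hV : Vᴴ * V = 1)
    (μ : ℝ) (v : EuclideanSpace ℂ (Fin r)) (hv : ‖v‖ = 1)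
    (hvec : Matrix.toEuclideanLin (Vᴴ * A * V) v = (μ : ℂ) • v)
    (hsmallest : ∀ μ' : ℝ, Module.End.HasEigenvalue
      (Matrix.toEuclideanLin (Vᴴ * A * V) :
        Module.End ℂ (EuclideanSpace ℂ (Fin r))) (μ' : ℂ) → μ ≤ μ')
    (γ ell res : ℝ) (hγ0 : 0 < γ)
    (hγ : γ ≤ lam ⟨m, hm⟩ - lam ⟨0, hn⟩)
    (hell : μ - lam ⟨0, hn⟩ ≤ ell)
    (hres : ‖Matrix.toEuclideanLin A (Matrix.toEuclideanLin V v) -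
      (μ : ℂ) • Matrix.toEuclideanLin V v‖ ≤ res) :
    ‖Submodule.orthogonalProjectionOnto
        (Module.End.eigenspace
          (Matrix.toEuclideanLin A : Module.End ℂ (EuclideanSpace ℂ (Fin n)))
          ((lam ⟨0, hn⟩ : ℝ) : ℂ))ᗮ
        (Matrix.toEuclideanLin V v)‖ ≤ (ell + res) / γ := by
  classical
  set lz : ℝ := lam ⟨0, hn⟩ with hlz
  set T : EuclideanSpace ℂ (Fin n) →ₗ[ℂ] EuclideanSpace ℂ (Fin n) :=
    Matrix.toEuclideanLin A with hTdef
  set u : EuclideanSpace ℂ (Fin n) := Matrix.toEuclideanLin V v with hudef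
  have hsymm : T.IsSymmetric := Matrix.isHermitian_iff_isSymmetric.mp hA
  -- Parseval helpers
  have hPars : ∀ x y : EuclideanSpace ℂ (Fin n),
      (inner ℂ x y : ℂ) = ∑ i, (starRingEnd ℂ) (w.repr x i) * (w.repr y i) := fun x y =>
    calc (inner ℂ x y : ℂ) = inner ℂ (w.repr x) (w.repr y) := (w.repr.inner_map_map x y).symm
    _ = ∑ i, (starRingEnd ℂ) (w.repr x i) * (w.repr y i) := by
        simp only [PiLp.inner_apply, RCLike.inner_apply]
        exact Finset.sum_congr rfl fun _ _ => mul_comm _ _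
  have hNorm : ∀ x : EuclideanSpace ℂ (Fin n), ‖x‖ ^ 2 = ∑ i, ‖w.repr x i‖ ^ 2 := by
    intro x
    rw [← w.repr.norm_map x]
    exact PiLp.norm_sq_eq_of_L2 (fun _ : Fin n => ℂ) _
  -- matrix product facts
  have hmulVA : Matrix.toEuclideanLin (Vᴴ * A * V) v = Matrix.toEuclideanLin Vᴴ (T u) := by
    rw [hTdef, hudef, Matrix.mul_assoc]
    simp only [Matrix.toEuclideanLin_eq_toLin]
    rw [Matrix.toLin_mul_apply _ (PiLp.basisFun 2 ℂ (Fin n)) _,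
      Matrix.toLin_mul_apply _ (PiLp.basisFun 2 ℂ (Fin n)) _]
  have hadj : ∀ (x : EuclideanSpace ℂ (Fin r)) (y : EuclideanSpace ℂ (Fin n)),
      (inner ℂ x (Matrix.toEuclideanLin Vᴴ y) : ℂ) = inner ℂ (Matrix.toEuclideanLin V x) y := by
    intro x y
    rw [Matrix.toEuclideanLin_conjTranspose_eq_adjoint, LinearMap.adjoint_inner_right]
  have hVV : ∀ x : EuclideanSpace ℂ (Fin r),
      Matrix.toEuclideanLin Vᴴ (Matrix.toEuclideanLin V x) = x := by
    intro x
    simp only [Matrix.toEuclideanLin_eq_toLin]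
    rw [← Matrix.toLin_mul_apply, hV, Matrix.toLin_one, LinearMap.id_apply]
  -- ‖u‖ = 1
  have hinner_uu : (inner ℂ u u : ℂ) = inner ℂ v v := by
    rw [← hadj v u, hudef, hVV]
  have hunorm : ‖u‖ = 1 := by
    have h2 := hinner_uu
    rw [inner_self_eq_norm_sq_to_K (𝕜 := ℂ) u, inner_self_eq_norm_sq_to_K (𝕜 := ℂ) v] at h2
    have h3 : ‖u‖ ^ 2 = ‖v‖ ^ 2 := by exact_mod_cast h2
    rw [← Real.sqrt_sq (norm_nonneg u), h3, hv, one_pow, Real.sqrt_one]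
  -- μ = ⟪u, T u⟫
  have hμu : (μ : ℂ) = inner ℂ u (T u) := by
    have h1 : (inner ℂ v (Matrix.toEuclideanLin (Vᴴ * A * V) v) : ℂ) = (μ : ℂ) := by
      rw [hvec, inner_smul_right, inner_self_eq_norm_sq_to_K, hv]
      simp
    rw [← h1, hmulVA, hadj, ← hudef]
  -- coordinates
  set c : Fin n → ℂ := fun i => w.repr u i with hc
  have hci : ∀ i, w.repr u i = c i := fun i => rfl
  have hcT : ∀ i, w.repr (T u) i = (lam i : ℂ) * c i := by
    intro i
    rw [OrthonormalBasis.repr_apply_apply, ← hsymm (w i) u, heig i, inner_smul_left,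
      Complex.conj_ofReal, ← OrthonormalBasis.repr_apply_apply, hci i]
  have hsum1 : ∑ i, ‖c i‖ ^ 2 = 1 := by
    have := hNorm u
    rw [hunorm, one_pow] at this
    exact this.symm
  have hμsum : μ = ∑ i, lam i * ‖c i‖ ^ 2 := by
    have h1 : (μ : ℂ) = ((∑ i, lam i * ‖c i‖ ^ 2 : ℝ) : ℂ) := by
      rw [hμu, hPars u (T u)]
      push_cast
      refine Finset.sum_congr rfl fun i _ => ?_
      rw [hcT i, hci i]
      have : (starRingEnd ℂ) (c i) * c i = (‖c i‖ : ℂ) ^ 2 := RCLike.conj_mul (c i)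
      calc (starRingEnd ℂ) (c i) * ((lam i : ℂ) * c i)
          = (lam i : ℂ) * ((starRingEnd ℂ) (c i) * c i) := by ring
        _ = (lam i : ℂ) * (‖c i‖ : ℂ) ^ 2 := by rw [this]
    exact_mod_cast h1
  have hμ0 : lz ≤ μ := by
    rw [hμsum]
    calc lz = ∑ i, lz * ‖c i‖ ^ 2 := by rw [← Finset.mul_sum, hsum1, mul_one]
      _ ≤ ∑ i, lam i * ‖c i‖ ^ 2 := by
          refine Finset.sum_le_sum fun i _ => ?_
          have : lz ≤ lam i := hmono (by simp [Fin.le_def])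
          exact mul_le_mul_of_nonneg_right this (by positivity)
  -- norm of residual-type vectors
  have hnorm_sub : ∀ t : ℝ, ‖T u - (t : ℂ) • u‖ ^ 2 = ∑ i, (lam i - t) ^ 2 * ‖c i‖ ^ 2 := by
    intro t
    rw [hNorm]
    refine Finset.sum_congr rfl fun i _ => ?_
    have : w.repr (T u - (t : ℂ) • u) i = ((lam i - t : ℝ) : ℂ) * c i := by
      rw [map_sub, map_smul]
      have h1 : (w.repr (T u) - (t : ℂ) • w.repr u) i = w.repr (T u) i - (t : ℂ) * c i := rfl
      rw [h1, hcT i]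
      push_cast
      ring
    rw [this, norm_mul, mul_pow, Complex.norm_real, Real.norm_eq_abs, sq_abs]
  -- the projection part
  set W₁ : Submodule ℂ (EuclideanSpace ℂ (Fin n)) :=
    Module.End.eigenspace (T : Module.End ℂ (EuclideanSpace ℂ (Fin n))) ((lz : ℝ) : ℂ) with hW
  have hwmem : ∀ i : Fin n, (i : ℕ) < m → w i ∈ W₁ := by
    intro i hi
    rw [hW, Module.End.mem_eigenspace_iff]
    rw [show ((T : Module.End ℂ (EuclideanSpace ℂ (Fin n))) (w i)) = T (w i) from rfl, heig i,
      hmul i hi]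
  set s : Finset (Fin n) := Finset.univ.filter (fun i : Fin n => (i : ℕ) < m) with hs
  set a : EuclideanSpace ℂ (Fin n) := ∑ i ∈ s, c i • w i with ha
  have hamem : a ∈ W₁ := by
    refine Submodule.sum_mem _ fun i hi => Submodule.smul_mem _ _ (hwmem i ?_)
    simpa [hs] using hi
  have hPa : Submodule.orthogonalProjectionOnto W₁ᗮ a = 0 :=
    Submodule.orthogonalProjectionOnto_apply_of_mem_orthogonal
      (W₁.le_orthogonal_orthogonal hamem)
  have hPu : ‖Submodule.orthogonalProjectionOnto W₁ᗮ u‖ ≤ ‖u - a‖ := by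
    have h1 : Submodule.orthogonalProjectionOnto W₁ᗮ u = Submodule.orthogonalProjectionOnto W₁ᗮ (u - a) := by
      rw [map_sub, hPa, sub_zero]
    rw [h1]
    calc ‖Submodule.orthogonalProjectionOnto W₁ᗮ (u - a)‖ ≤ ‖Submodule.orthogonalProjectionOnto W₁ᗮ‖ * ‖u - a‖ :=
          (Submodule.orthogonalProjectionOnto W₁ᗮ).le_opNorm _
      _ ≤ 1 * ‖u - a‖ :=
          mul_le_mul_of_nonneg_right (Submodule.orthogonalProjectionOnto_norm_le _) (norm_nonneg _)
      _ = ‖u - a‖ := one_mul _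
  have hrepr_ua : ∀ i, w.repr (u - a) i = if (i : ℕ) < m then 0 else c i := by
    intro i
    rw [map_sub]
    have h1 : (w.repr u - w.repr a) i = c i - w.repr a i := rfl
    have h2 : w.repr a i = if (i : ℕ) < m then c i else 0 := by
      rw [OrthonormalBasis.repr_apply_apply, ha]
      rw [inner_sum]
      simp only [inner_smul_right, orthonormal_iff_ite.mp w.orthonormal, mul_ite, mul_one,
        mul_zero]
      rw [Finset.sum_ite_eq s i c]
      simp [hs]
    rw [h1, h2]
    by_cases hi : (i : ℕ) < m <;> simp [hi]
  have hnorm_ua : ‖u - a‖ ^ 2 = ∑ i : Fin n, (if (i : ℕ) < m then 0 else ‖c i‖ ^ 2) := by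
    rw [hNorm]
    refine Finset.sum_congr rfl fun i _ => ?_
    rw [hrepr_ua i]
    by_cases hi : (i : ℕ) < m <;> simp [hi]
  -- gap inequality
  have hgap2 : γ ^ 2 * ‖u - a‖ ^ 2 ≤ ‖T u - (lz : ℂ) • u‖ ^ 2 := by
    rw [hnorm_ua, hnorm_sub lz, Finset.mul_sum]
    refine Finset.sum_le_sum fun i _ => ?_
    by_cases hi : (i : ℕ) < m
    · simp only [hi, if_true, mul_zero]
      positivity
    · simp only [hi, if_false]
      have hmi : lam ⟨m, hm⟩ ≤ lam i := hmono (by simp [Fin.le_def]; omega)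
      have hγi : γ ≤ lam i - lz := by linarith
      exact mul_le_mul_of_nonneg_right (pow_le_pow_left₀ hγ0.le hγi 2) (by positivity)
  have hγPu : γ * ‖Submodule.orthogonalProjectionOnto W₁ᗮ u‖ ≤ ‖T u - (lz : ℂ) • u‖ := by
    have h1 : (γ * ‖Submodule.orthogonalProjectionOnto W₁ᗮ u‖) ^ 2 ≤ ‖T u - (lz : ℂ) • u‖ ^ 2 := by
      rw [mul_pow]
      calc γ ^ 2 * ‖Submodule.orthogonalProjectionOnto W₁ᗮ u‖ ^ 2 ≤ γ ^ 2 * ‖u - a‖ ^ 2 := by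
            exact mul_le_mul_of_nonneg_left
              (pow_le_pow_left₀ (norm_nonneg _) hPu 2) (by positivity)
        _ ≤ ‖T u - (lz : ℂ) • u‖ ^ 2 := hgap2
    exact le_of_pow_le_pow_left₀ two_ne_zero (norm_nonneg _) h1
  -- triangle inequality
  have hTri : ‖T u - (lz : ℂ) • u‖ ≤ res + (μ - lz) := by
    have hdec : T u - (lz : ℂ) • u = (T u - (μ : ℂ) • u) + ((μ - lz : ℝ) : ℂ) • u := by
      push_cast
      module
    rw [hdec]
    calc ‖(T u - (μ : ℂ) • u) + ((μ - lz : ℝ) : ℂ) • u‖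
        ≤ ‖T u - (μ : ℂ) • u‖ + ‖((μ - lz : ℝ) : ℂ) • u‖ := norm_add_le _ _
      _ ≤ res + (μ - lz) := by
          have h2 : ‖((μ - lz : ℝ) : ℂ) • u‖ = μ - lz := by
            rw [norm_smul, Complex.norm_real, Real.norm_eq_abs, hunorm, mul_one,
              abs_of_nonneg (by linarith)]
          exact add_le_add hres (le_of_eq h2)
  -- finish
  rw [le_div_iff₀ hγ0]
  have : γ * ‖Submodule.orthogonalProjectionOnto W₁ᗮ u‖ ≤ ell + res := by
    calc γ * ‖Submodule.orthogonalProjectionOnto W₁ᗮ u‖ ≤ ‖T u - (lz : ℂ) • u‖ := hγPu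
      _ ≤ res + (μ - lz) := hTri
      _ ≤ ell + res := by linarith
  linarith
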